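/- Let V : ℝ → ℝ be a nonnegative absolutely continuous function with V'(t) ≤ μ for almost every t at which V(t) > 0, where μ < 0. Then V(t) = 0 for all t ≥ V(0)/(-μ), and in particular the hitting time t₀ = inf{t ≥ 0 : V(t) = 0} satisfies t₀ ≤ V(0)/(-μ). -/

import Mathlib

open MeasureTheory Set


/-- a nonnegative absolutely continuous scalar function whose a.e.
derivative is ≤ μ < 0 wherever it is positive vanishes after time V(0)/(-μ);
in particular the hitting time is at most V(0)/(-μ).  Absolute continuity is
encoded by the integral (FTC) representation with density `g = V'` a.e. -/
theorem stmt1 (V g : ℝ → ℝ) (μ : ℝ) (hμ : μ < 0)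
    (hnn : ∀ t : ℝ, 0 ≤ t → 0 ≤ V t)
    (hint : ∀ t : ℝ, 0 ≤ t → V t = V 0 + ∫ s in (0:ℝ)..t, g s)
    (hloc : ∀ t : ℝ, 0 ≤ t → IntervalIntegrable g MeasureTheory.volume 0 t)
    (hg : ∀ᵐ s : ℝ, 0 ≤ s → 0 < V s → g s ≤ μ) :
    (∀ t : ℝ, V 0 / (-μ) ≤ t → V t = 0) ∧
      sInf {t : ℝ | 0 ≤ t ∧ V t = 0} ≤ V 0 / (-μ) := by
  have hμ' : (0:ℝ) < -μ := by linarith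
  set T : ℝ := V 0 / (-μ) with hT
  have hT0 : 0 ≤ T := div_nonneg (hnn 0 le_rfl) hμ'.le
  -- key inequality
  have key : ∀ a b : ℝ, 0 ≤ a → a ≤ b → (∀ s ∈ Ioo a b, 0 < V s) →
      V b ≤ V a + μ * (b - a) := by
    intro a b ha hab hpos
    have hb : 0 ≤ b := ha.trans hab
    have hiab : IntervalIntegrable g volume a b :=
      (hloc b hb).mono_set (by rw [uIcc_of_le hab, uIcc_of_le hb]; exact Icc_subset_Icc ha le_rfl)
    have hsplit : (∫ s in (0:ℝ)..a, g s) + (∫ s in a..b, g s) = ∫ s in (0:ℝ)..b, g s :=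
      intervalIntegral.integral_add_adjacent_intervals (hloc a ha) hiab
    have hVb : V b = V a + ∫ s in a..b, g s := by
      rw [hint b hb, hint a ha, ← hsplit]; ring
    have hmono : (∫ s in a..b, g s) ≤ ∫ s in a..b, (μ:ℝ) := by
      apply intervalIntegral.integral_mono_ae_restrict hab hiab (intervalIntegrable_const)
      have hnull : (volume : Measure ℝ) {a} = 0 := measure_singleton a
      have hnullb : (volume : Measure ℝ) {b} = 0 := measure_singleton b
      have h1 : ∀ᵐ s : ℝ, s ≠ a := by
        simp [ae_iff, hnull]
      have h2 : ∀ᵐ s : ℝ, s ≠ b := by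
        simp [ae_iff, hnullb]
      have hglob : ∀ᵐ s : ℝ, s ∈ Icc a b → g s ≤ μ := by
        filter_upwards [hg, h1, h2] with s hs hsa hsb hmem
        have hsa' : a < s := lt_of_le_of_ne hmem.1 (Ne.symm hsa)
        have hsb' : s < b := lt_of_le_of_ne hmem.2 hsb
        exact hs (ha.trans hsa'.le) (hpos s ⟨hsa', hsb'⟩)
      have := ae_restrict_of_ae (μ := (volume : Measure ℝ)) (s := Icc a b) hglob
      filter_upwards [this, ae_restrict_mem measurableSet_Icc] with s hs hmem
      exact hs hmem
    have : (∫ s in a..b, (μ:ℝ)) = μ * (b - a) := by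
      simp [intervalIntegral.integral_const, smul_eq_mul, mul_comm]
    linarith [hVb, hmono, this ▸ hmono]
  -- continuity of V on [0,b]
  have cont : ∀ b : ℝ, 0 ≤ b → ContinuousOn V (Icc 0 b) := by
    intro b hb
    have h1 : ContinuousOn (fun t => V 0 + ∫ s in (0:ℝ)..t, g s) (Icc 0 b) := by
      apply ContinuousOn.add continuousOn_const
      have h2 := intervalIntegral.continuousOn_primitive_interval
        (μ := volume) (a := 0) (b := b) ((intervalIntegrable_iff' (f := g) (a := 0) (b := b) (μ := volume)).mp (hloc b hb))
      rwa [uIcc_of_le hb] at h2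
    exact fun t ht => (h1 t ht).congr (fun s hs => hint s hs.1) (hint t ht.1)
  -- exists zero in [0,T]
  have hex : ∃ t₀ ∈ Icc (0:ℝ) T, V t₀ = 0 := by
    by_contra hcon
    push_neg at hcon
    have hpos : ∀ s ∈ Icc (0:ℝ) T, 0 < V s := fun s hs =>
      lt_of_le_of_ne (hnn s hs.1) (Ne.symm (hcon s hs))
    have := key 0 T le_rfl hT0 (fun s hs => hpos s ⟨hs.1.le, hs.2.le⟩)
    have hμT : μ * (T - 0) = -(V 0) := by
      field_simp [hT]
      rw [hT, sub_zero, mul_div_assoc', div_eq_iff hμ'.ne']; ring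
    have : V T ≤ 0 := by rw [hμT] at this; linarith
    exact absurd this (not_le.mpr (hpos T ⟨hT0, le_rfl⟩))
  -- persistence
  have pers : ∀ t₀ : ℝ, 0 ≤ t₀ → V t₀ = 0 → ∀ t, t₀ ≤ t → V t = 0 := by
    intro t₀ ht₀ hV0 t htt
    by_contra hne
    have hVt : 0 < V t := lt_of_le_of_ne (hnn t (ht₀.trans htt)) (Ne.symm hne)
    have htlt : t₀ < t := lt_of_le_of_ne htt (by rintro rfl; exact hne hV0)
    set Z := {s ∈ Icc t₀ t | V s = 0} with hZ
    have hZne : Z.Nonempty := ⟨t₀, ⟨le_rfl, htt⟩, hV0⟩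
    have hZbdd : BddAbove Z := ⟨t, fun s hs => hs.1.2⟩
    have hZclosed : IsClosed Z := by
      have hc : ContinuousOn V (Icc t₀ t) :=
        (cont t (ht₀.trans htt)).mono (Icc_subset_Icc ht₀ le_rfl)
      have heq : Z = Icc t₀ t ∩ V ⁻¹' {0} := by ext s; simp [hZ]
      rw [heq]
      exact hc.preimage_isClosed_of_isClosed isClosed_Icc isClosed_singleton
    obtain ⟨⟨hut₀, hut⟩, hVu⟩ := hZclosed.csSup_mem hZne hZbdd
    have hult : sSup Z < t := lt_of_le_of_ne hut (fun h => hne (h ▸ hVu))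
    have hpos : ∀ s ∈ Ioo (sSup Z) t, 0 < V s := by
      intro s hs
      refine lt_of_le_of_ne (hnn s ((ht₀.trans hut₀).trans hs.1.le)) (Ne.symm ?_)
      intro hVs
      have : s ∈ Z := ⟨⟨hut₀.trans hs.1.le, hs.2.le⟩, hVs⟩
      exact absurd (le_csSup hZbdd this) (not_le.mpr hs.1)
    have := key (sSup Z) t (ht₀.trans hut₀) hult.le hpos
    nlinarith
  obtain ⟨t₀, ⟨ht₀0, ht₀T⟩, hVt₀⟩ := hex
  constructor
  · intro t ht
    exact pers t₀ ht₀0 hVt₀ t (ht₀T.trans ht)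
  · have hmem : t₀ ∈ {t : ℝ | 0 ≤ t ∧ V t = 0} := ⟨ht₀0, hVt₀⟩
    have hbdd : BddBelow {t : ℝ | 0 ≤ t ∧ V t = 0} := ⟨0, fun s hs => hs.1⟩
    exact (csInf_le hbdd hmem).trans ht₀T
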